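/- Let G be a connected simple graph on n vertices with diameter exactly 2, maximum vertex degree Δ(G), and independence number α(G). Then DLS(G) ≥ Δ(G) + α(G) + 1 − n. -/

import Mathlib

open Finset Matrix Polynomial

/-- The transmission `Tr(v)` of a vertex `v`: the sum of the distances from `v`
to all other vertices of the graph. -/
noncomputable def transm {n : ℕ} (G : SimpleGraph (Fin n)) (v : Fin n) : ℝ :=
  ∑ u : Fin n, (G.dist v u : ℝ)

/-- The distance Laplacian matrix `D^L(G) = Diag(Tr) - D(G)` of a graph `G`. -/
noncomputable def distLap {n : ℕ} (G : SimpleGraph (Fin n)) : Matrix (Fin n) (Fin n) ℝ :=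
  Matrix.diagonal (transm G) - Matrix.of (fun u v : Fin n => (G.dist u v : ℝ))

/-- `IsDLSpec G μ` says that `μ 0 , μ 1 , …, μ (n-1)` are exactly the eigenvalues
(with multiplicity) of the distance Laplacian matrix of `G`; combined with `Antitone μ`
this means `μ ⟨i-1,_⟩ = ∂_i^L(G)` in the usual decreasing ordering. -/
def IsDLSpec {n : ℕ} (G : SimpleGraph (Fin n)) (μ : Fin n → ℝ) : Prop :=
  (distLap G).charpoly = ∏ i : Fin n, (X - C (μ i))

/-- The Wiener index `W(G) = (1/2) ∑_v Tr(v)`. -/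
noncomputable def wiener {n : ℕ} (G : SimpleGraph (Fin n)) : ℝ :=
  (∑ v : Fin n, transm G v) / 2

/-- The maximum transmission `Tr_max(G) = max_v Tr(v)`. -/
noncomputable def trMax {n : ℕ} (G : SimpleGraph (Fin n)) : ℝ :=
  ⨆ v : Fin n, transm G v

/-- The independence number `α(G)`: the maximum size of a set of pairwise
nonadjacent vertices of `G`. -/
noncomputable def indepNum {n : ℕ} (G : SimpleGraph (Fin n)) : ℕ :=
  sSup {k | ∃ s : Finset (Fin n), (∀ u ∈ s, ∀ v ∈ s, ¬ G.Adj u v) ∧ s.card = k}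

section LinAlgAux

variable {n : ℕ} {A : Matrix (Fin n) (Fin n) ℝ}

/-- Coefficients of a vector in the orthonormal eigenbasis of a symmetric matrix. -/
noncomputable def ecoef (hA : A.IsHermitian) (x : Fin n → ℝ) (i : Fin n) : ℝ :=
  (WithLp.equiv 2 (Fin n → ℝ)) (hA.eigenvectorBasis i) ⬝ᵥ x

lemma inner_eq_dot (x y : EuclideanSpace ℝ (Fin n)) :
    (inner ℝ x y : ℝ) = (WithLp.equiv 2 (Fin n → ℝ)) x ⬝ᵥ (WithLp.equiv 2 (Fin n → ℝ)) y := by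
  simp [PiLp.inner_apply, dotProduct, WithLp.equiv]; exact Finset.sum_congr rfl fun _ _ => mul_comm _ _

lemma parseval_dot (hA : A.IsHermitian) (x y : Fin n → ℝ) :
    x ⬝ᵥ y = ∑ i, (ecoef hA x i) * (ecoef hA y i) := by
  have h := hA.eigenvectorBasis.sum_inner_mul_inner ((WithLp.equiv 2 (Fin n → ℝ)).symm x)
    ((WithLp.equiv 2 (Fin n → ℝ)).symm y)
  simp only [inner_eq_dot, Equiv.apply_symm_apply] at h
  rw [← h]
  congr 1; funext i
  rw [ecoef, ecoef, dotProduct_comm ((WithLp.equiv 2 (Fin n → ℝ)) (hA.eigenvectorBasis i)) x]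

lemma mulVec_dot_symm (hA : A.IsHermitian) (v x : Fin n → ℝ) :
    v ⬝ᵥ (A *ᵥ x) = (A *ᵥ v) ⬝ᵥ x := by
  rw [dotProduct_mulVec, ← mulVec_transpose]
  have hT : Aᵀ = A := by
    rw [← Matrix.conjTranspose_eq_transpose_of_trivial]; exact hA
  rw [hT]

lemma ecoef_mulVec (hA : A.IsHermitian) (x : Fin n → ℝ) (i : Fin n) :
    ecoef hA (A *ᵥ x) i = hA.eigenvalues i * ecoef hA x i := by
  rw [ecoef, mulVec_dot_symm hA, WithLp.equiv_apply, hA.mulVec_eigenvectorBasis, smul_dotProduct, ecoef, WithLp.equiv_apply, smul_eq_mul]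

lemma quad_eq_sum_ecoef (hA : A.IsHermitian) (x : Fin n → ℝ) :
    x ⬝ᵥ (A *ᵥ x) = ∑ i, hA.eigenvalues i * (ecoef hA x i)^2 := by
  rw [parseval_dot hA]
  congr 1; funext i
  rw [ecoef_mulVec hA]; ring

lemma dot_eq_sum_ecoef (hA : A.IsHermitian) (x : Fin n → ℝ) :
    x ⬝ᵥ x = ∑ i, (ecoef hA x i)^2 := by
  rw [parseval_dot hA]; congr 1; funext i; ring

lemma rayleigh_upper (hA : A.IsHermitian) (t : ℝ) (h : ∀ i, hA.eigenvalues i ≤ t)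
    (x : Fin n → ℝ) : x ⬝ᵥ (A *ᵥ x) ≤ t * (x ⬝ᵥ x) := by
  rw [quad_eq_sum_ecoef hA, dot_eq_sum_ecoef hA, Finset.mul_sum]
  exact Finset.sum_le_sum fun i _ => mul_le_mul_of_nonneg_right (h i) (sq_nonneg _)

lemma rayleigh_lower_perp (hA : A.IsHermitian) (s : ℝ) (hs : 0 < s) (hn : 0 < n)
    (i₀ : Fin n) (hlow : ∀ i, i ≠ i₀ → s ≤ hA.eigenvalues i)
    (hone : A *ᵥ (fun _ => 1) = 0) (x : Fin n → ℝ) (hx : ∑ u, x u = 0) :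
    s * (x ⬝ᵥ x) ≤ x ⬝ᵥ (A *ᵥ x) := by
  classical
  set e : Fin n → ℝ := fun _ => 1 with he
  have he0 : ∀ i, i ≠ i₀ → ecoef hA e i = 0 := by
    intro i hi
    have h1 : hA.eigenvalues i * ecoef hA e i = 0 := by
      rw [← ecoef_mulVec hA, hone]
      simp [ecoef]
    have hpos : hA.eigenvalues i ≠ 0 := ne_of_gt (lt_of_lt_of_le hs (hlow i hi))
    exact (mul_eq_zero.mp h1).resolve_left hpos
  have hee : e ⬝ᵥ e = (n : ℝ) := by simp [he, dotProduct]
  have hei₀ : ecoef hA e i₀ ≠ 0 := by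
    intro h0
    have hz : e ⬝ᵥ e = 0 := by
      rw [dot_eq_sum_ecoef hA]
      apply Finset.sum_eq_zero; intro i _
      by_cases hi : i = i₀
      · rw [hi, h0]; ring
      · rw [he0 i hi]; ring
    rw [hee] at hz
    exact absurd hz (by positivity)
  have hcx : ecoef hA x i₀ = 0 := by
    have hex : e ⬝ᵥ x = 0 := by simp [dotProduct, he, hx]
    rw [parseval_dot hA] at hex
    have hsing : ∑ i, ecoef hA e i * ecoef hA x i = ecoef hA e i₀ * ecoef hA x i₀ := by
      apply Finset.sum_eq_single
      · intro i _ hi; rw [he0 i hi]; ring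
      · intro h; exact absurd (Finset.mem_univ i₀) h
    rw [hsing] at hex
    exact (mul_eq_zero.mp hex).resolve_left hei₀
  rw [quad_eq_sum_ecoef hA, dot_eq_sum_ecoef hA, Finset.mul_sum]
  apply Finset.sum_le_sum
  intro i _
  by_cases hi : i = i₀
  · rw [hi, hcx]; simp
  · exact mul_le_mul_of_nonneg_right (hlow i hi) (sq_nonneg _)

lemma charpoly_conj (V W B : Matrix (Fin n) (Fin n) ℝ) (hVW : V * W = 1) :
    (V * B * W).charpoly = B.charpoly := by
  classical
  set V' := (C : ℝ →+* ℝ[X]).mapMatrix V with hV'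
  set W' := (C : ℝ →+* ℝ[X]).mapMatrix W with hW'
  have hc : V' * W' = 1 := by rw [hV', hW', ← _root_.map_mul, hVW, _root_.map_one]
  have h2 : charmatrix (V * B * W) = V' * charmatrix B * W' := by
    rw [charmatrix, charmatrix, _root_.map_mul, _root_.map_mul]
    have hs : (Matrix.scalar (Fin n) (X : ℝ[X])) = (X : ℝ[X]) • (1 : Matrix (Fin n) (Fin n) ℝ[X]) := by
      simp [Matrix.scalar_apply, Matrix.smul_one_eq_diagonal]
    rw [mul_sub, sub_mul, hs]
    congr 1
    rw [Matrix.mul_smul, Matrix.smul_mul, mul_one, hc]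
  rw [Matrix.charpoly, h2, det_mul, det_mul, Matrix.charpoly]
  have : V'.det * (charmatrix B).det * W'.det = (V'.det * W'.det) * (charmatrix B).det := by ring
  rw [this, ← det_mul, hc, det_one, one_mul]

lemma charpoly_eq_prod_eigen (hA : A.IsHermitian) :
    A.charpoly = ∏ i, (X - C (hA.eigenvalues i)) := by
  classical
  have hU : (hA.eigenvectorUnitary : Matrix (Fin n) (Fin n) ℝ) *
      star (hA.eigenvectorUnitary : Matrix (Fin n) (Fin n) ℝ) = 1 :=
    Matrix.mem_unitaryGroup_iff.mp hA.eigenvectorUnitary.2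
  have hd : (RCLike.ofReal ∘ hA.eigenvalues : Fin n → ℝ) = hA.eigenvalues := by
    funext i; simp
  conv_lhs => rw [hA.spectral_theorem, Unitary.conjStarAlgAut_apply]
  rw [charpoly_conj _ _ _ hU, hd]
  have hbt : (Matrix.diagonal hA.eigenvalues).BlockTriangular id :=
    Matrix.blockTriangular_diagonal _
  rw [Matrix.charpoly_of_upperTriangular _ hbt]
  exact Finset.prod_congr rfl fun i _ => by rw [Matrix.diagonal_apply_eq]

lemma prod_X_sub_C_roots (f : Fin n → ℝ) :
    (∏ i, (X - C (f i))).roots = Multiset.map f Finset.univ.val := by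
  have h : ∏ i, (X - C (f i)) = ((Multiset.map f Finset.univ.val).map (fun a => X - C a)).prod := by
    rw [Multiset.map_map]
    rfl
  rw [h, Polynomial.roots_multiset_prod_X_sub_C]

lemma eigen_multiset_eq (hA : A.IsHermitian) (μ : Fin n → ℝ)
    (hμ : A.charpoly = ∏ i, (X - C (μ i)))
    (hch : A.charpoly = ∏ i, (X - C (hA.eigenvalues i))) :
    Multiset.map μ Finset.univ.val = Multiset.map hA.eigenvalues Finset.univ.val := by
  rw [← prod_X_sub_C_roots μ, ← prod_X_sub_C_roots hA.eigenvalues, ← hμ, ← hch]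

end LinAlgAux

section GraphAux

variable {n : ℕ} (G : SimpleGraph (Fin n)) [DecidableRel G.Adj]

lemma distLap_apply (u v : Fin n) :
    distLap G u v = (if u = v then transm G u else 0) - (G.dist u v : ℝ) := by
  by_cases h : u = v <;> simp [distLap, Matrix.diagonal, h]

lemma distLap_isHermitian : (distLap G).IsHermitian := by
  ext i j
  simp only [Matrix.conjTranspose_apply, distLap_apply, star_trivial]
  rw [SimpleGraph.dist_comm]
  by_cases h : i = j
  · subst h; rfl
  · simp [h, Ne.symm h]

lemma distLap_mulVec_one : distLap G *ᵥ (fun _ => (1:ℝ)) = 0 := by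
  funext v
  simp only [Matrix.mulVec, dotProduct, distLap_apply, mul_one, Pi.zero_apply]
  rw [Finset.sum_sub_distrib]
  simp [Finset.sum_ite_eq, transm]

lemma quad_distLap (x : Fin n → ℝ) :
    x ⬝ᵥ (distLap G *ᵥ x) = (1/2) * ∑ u, ∑ v, (G.dist u v : ℝ) * (x u - x v)^2 := by
  have hL : x ⬝ᵥ (distLap G *ᵥ x)
      = (∑ u, ∑ v, (G.dist u v : ℝ) * x u ^ 2)
        - ∑ u, ∑ v, (G.dist u v : ℝ) * (x u * x v) := by
    rw [dotProduct, ← Finset.sum_sub_distrib]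
    apply Finset.sum_congr rfl
    intro u _
    have hmv : (distLap G *ᵥ x) u = transm G u * x u - ∑ v, (G.dist u v : ℝ) * x v := by
      simp only [Matrix.mulVec, dotProduct, distLap_apply, sub_mul, ite_mul, zero_mul]
      rw [Finset.sum_sub_distrib]
      simp
    rw [hmv, transm, mul_sub, Finset.mul_sum, Finset.sum_mul, Finset.mul_sum]
    congr 1
    · apply Finset.sum_congr rfl; intro v _; ring
    · apply Finset.sum_congr rfl; intro v _; ring
  have hswap : ∑ u, ∑ v, (G.dist u v : ℝ) * x v ^ 2
      = ∑ u, ∑ v, (G.dist u v : ℝ) * x u ^ 2 := by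
    rw [Finset.sum_comm]
    apply Finset.sum_congr rfl; intro u _
    apply Finset.sum_congr rfl; intro v _
    rw [SimpleGraph.dist_comm]
  have hR : (1/2) * ∑ u, ∑ v, (G.dist u v : ℝ) * (x u - x v)^2
      = (1/2) * ((∑ u, ∑ v, (G.dist u v : ℝ) * x u ^ 2)
        + (∑ u, ∑ v, (G.dist u v : ℝ) * x v ^ 2)
        - 2 * ∑ u, ∑ v, (G.dist u v : ℝ) * (x u * x v)) := by
    congr 1
    rw [← Finset.sum_add_distrib, Finset.mul_sum, ← Finset.sum_sub_distrib]
    apply Finset.sum_congr rfl; intro u _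
    rw [← Finset.sum_add_distrib, Finset.mul_sum, ← Finset.sum_sub_distrib]
    apply Finset.sum_congr rfl; intro v _
    ring
  rw [hL, hR, hswap]
  ring

lemma dist_diam2 (hG : G.Connected) (hd : G.diam = 2) (u v : Fin n) :
    (G.dist u v : ℝ) = (if G.Adj u v then 1 else if u = v then 0 else 2) := by
  by_cases hadj : G.Adj u v
  · rw [SimpleGraph.dist_eq_one_iff_adj.mpr hadj]; simp [hadj]
  by_cases huv : u = v
  · subst huv; simp [SimpleGraph.dist_self, hadj]
  · have hne : G.ediam ≠ ⊤ := SimpleGraph.ediam_ne_top_of_diam_ne_zero (by rw [hd]; norm_num)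
    have h2 : G.dist u v ≤ 2 := hd ▸ SimpleGraph.dist_le_diam hne
    have h0 : G.dist u v ≠ 0 := by
      intro h
      exact huv ((hG.dist_eq_zero_iff).mp h)
    have h1 : G.dist u v ≠ 1 := fun h => hadj (SimpleGraph.dist_eq_one_iff_adj.mp h)
    have : G.dist u v = 2 := by omega
    rw [this]; simp [hadj, huv]

lemma sq_double_sum (x : Fin n → ℝ) :
    ∑ u, ∑ v : Fin n, (x u - x v)^2
      = 2*n*(x ⬝ᵥ x) - 2*(∑ u, x u)^2 := by
  have hdot : x ⬝ᵥ x = ∑ u, x u ^ 2 := by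
    rw [dotProduct]; exact Finset.sum_congr rfl fun u _ => by ring
  have inner : ∀ u, ∑ v, (x u - x v)^2
      = n * x u^2 + (∑ v, x v^2) - 2 * (x u * ∑ v, x v) := by
    intro u
    have e1 : ∀ v : Fin n, (x u - x v)^2 = x u^2 + x v^2 - 2*(x u * x v) := fun v => by ring
    rw [Finset.sum_congr rfl fun v _ => e1 v, Finset.sum_sub_distrib, Finset.sum_add_distrib,
      Finset.sum_const, ← Finset.mul_sum, ← Finset.mul_sum]
    simp [nsmul_eq_mul]
  rw [Finset.sum_congr rfl fun u _ => inner u, Finset.sum_sub_distrib, Finset.sum_add_distrib,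
    Finset.sum_const, ← Finset.mul_sum, ← Finset.mul_sum, ← Finset.sum_mul]
  simp only [nsmul_eq_mul, Finset.card_univ, Fintype.card_fin, hdot]
  ring_nf

lemma key_identity (hG : G.Connected) (hd : G.diam = 2) (x : Fin n → ℝ) :
    x ⬝ᵥ (distLap G *ᵥ x)
      = 2*n*(x ⬝ᵥ x) - 2*(∑ u, x u)^2
        - (1/2) * ∑ u, ∑ v, (if G.Adj u v then (x u - x v)^2 else 0) := by
  rw [quad_distLap]
  have h1 : ∀ u v : Fin n, (G.dist u v : ℝ) * (x u - x v)^2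
      = 2 * (x u - x v)^2 - (if G.Adj u v then (x u - x v)^2 else 0) := by
    intro u v
    rw [dist_diam2 G hG hd]
    by_cases hadj : G.Adj u v
    · simp only [if_pos hadj]; ring
    · by_cases huv : u = v
      · subst huv; simp [hadj]
      · simp only [if_neg hadj, if_neg huv]; ring
  have h2 : ∑ u, ∑ v, (G.dist u v : ℝ) * (x u - x v)^2
      = 2 * (∑ u, ∑ v : Fin n, (x u - x v)^2)
        - ∑ u, ∑ v, (if G.Adj u v then (x u - x v)^2 else 0) := by
    rw [Finset.mul_sum, ← Finset.sum_sub_distrib]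
    apply Finset.sum_congr rfl; intro u _
    rw [Finset.mul_sum, ← Finset.sum_sub_distrib]
    apply Finset.sum_congr rfl; intro v _
    exact h1 u v
  rw [h2, sq_double_sum]
  ring

lemma q_split (x : Fin n → ℝ) :
    ((1:ℝ)/2) * (∑ u, ∑ v, (if G.Adj u v then (x u - x v)^2 else 0))
      + (1/2) * (∑ u, ∑ v, (if u ≠ v ∧ ¬ G.Adj u v then (x u - x v)^2 else 0))
      = n*(x ⬝ᵥ x) - (∑ u, x u)^2 := by
  have h1 : ∀ u v : Fin n,
      (if G.Adj u v then (x u - x v)^2 else 0)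
        + (if u ≠ v ∧ ¬ G.Adj u v then (x u - x v)^2 else 0) = (x u - x v)^2 := by
    intro u v
    by_cases hadj : G.Adj u v
    · have : ¬ (u ≠ v ∧ ¬ G.Adj u v) := fun h => h.2 hadj
      simp [hadj, this]
    · by_cases huv : u = v
      · subst huv; simp [hadj]
      · simp [hadj, huv]
  have h2 : (∑ u, ∑ v, (if G.Adj u v then (x u - x v)^2 else 0))
      + (∑ u, ∑ v, (if u ≠ v ∧ ¬ G.Adj u v then (x u - x v)^2 else 0))
      = ∑ u, ∑ v : Fin n, (x u - x v)^2 := by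
    rw [← Finset.sum_add_distrib]
    apply Finset.sum_congr rfl; intro u _
    rw [← Finset.sum_add_distrib]
    apply Finset.sum_congr rfl; intro v _
    exact h1 u v
  have h3 := sq_double_sum x
  nlinarith [h2, h3]

end GraphAux

section StarVec

variable {n : ℕ}

noncomputable def starVec (v : Fin n) (N : Finset (Fin n)) : Fin n → ℝ :=
  fun u => if u = v then (N.card : ℝ) else if u ∈ N then -1 else 0

lemma starVec_split {v : Fin n} {N : Finset (Fin n)} (hv : v ∉ N) (u : Fin n) :
    starVec v N u = (if u = v then (N.card : ℝ) else 0) + (if u ∈ N then -1 else 0) := by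
  by_cases h1 : u = v
  · subst h1; simp [starVec, hv]
  · simp [starVec, h1]

lemma starVec_sum {v : Fin n} {N : Finset (Fin n)} (hv : v ∉ N) :
    ∑ u, starVec v N u = 0 := by
  rw [Finset.sum_congr rfl fun u _ => starVec_split hv u, Finset.sum_add_distrib]
  rw [Finset.sum_ite_eq' Finset.univ v (fun _ => (N.card : ℝ))]
  rw [Finset.sum_ite_mem, Finset.univ_inter, Finset.sum_const]
  simp

lemma starVec_dot {v : Fin n} {N : Finset (Fin n)} (hv : v ∉ N) :
    starVec v N ⬝ᵥ starVec v N = (N.card : ℝ)^2 + N.card := by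
  have h : ∀ u, starVec v N u * starVec v N u
      = (if u = v then ((N.card:ℝ))^2 else 0) + (if u ∈ N then 1 else 0) := by
    intro u
    by_cases h1 : u = v
    · subst h1; simp [starVec, hv]; ring
    · by_cases h2 : u ∈ N <;> simp [starVec, h1, h2]
  rw [dotProduct, Finset.sum_congr rfl fun u _ => h u, Finset.sum_add_distrib]
  rw [Finset.sum_ite_eq' Finset.univ v (fun _ => ((N.card:ℝ))^2)]
  rw [Finset.sum_ite_mem, Finset.univ_inter, Finset.sum_const]
  simp

lemma starVec_qbound (P : Fin n → Fin n → Prop) [DecidableRel P]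
    (hsym : ∀ a b, P a b → P b a) (v : Fin n) (N : Finset (Fin n)) (hv : v ∉ N)
    (hadj : ∀ u ∈ N, P v u) :
    (N.card : ℝ) * ((N.card : ℝ) + 1)^2
      ≤ (1/2) * ∑ u, ∑ w, (if P u w then (starVec v N u - starVec v N w)^2 else 0) := by
  classical
  set x := starVec v N with hx
  set T : Fin n → Fin n → ℝ := fun u w => (if P u w then (x u - x w)^2 else 0) with hT
  have hTnn : ∀ u w, 0 ≤ T u w := by
    intro u w; rw [hT]; dsimp; split <;> positivity
  set f : Fin n → ℝ := fun u => ∑ w, T u w with hf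
  have hfnn : ∀ u, 0 ≤ f u := fun u => Finset.sum_nonneg fun w _ => hTnn u w
  set d : ℝ := (N.card : ℝ) with hdd
  have hxv : x v = d := by rw [hx]; simp [starVec, hdd]
  have hxN : ∀ u ∈ N, x u = -1 := by
    intro u hu
    have : u ≠ v := fun h => hv (h ▸ hu)
    rw [hx]; simp [starVec, this, hu]
  have hfv : d * (d+1)^2 ≤ f v := by
    rw [hf]
    have : ∑ w ∈ N, T v w ≤ ∑ w, T v w :=
      Finset.sum_le_sum_of_subset_of_nonneg (Finset.subset_univ N)
        (fun w _ _ => hTnn v w)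
    refine le_trans (le_of_eq ?_) this
    have hTvw : ∀ w ∈ N, T v w = (d+1)^2 := by
      intro w hw; rw [hT]; dsimp only
      rw [if_pos (hadj w hw), hxv, hxN w hw]; ring
    rw [Finset.sum_congr rfl hTvw, Finset.sum_const, nsmul_eq_mul, hdd]
  have hfN : ∀ u ∈ N, (d+1)^2 ≤ f u := by
    intro u hu
    rw [hf]
    have h1 : T u v = (d+1)^2 := by
      rw [hT]; dsimp only
      rw [if_pos (hsym v u (hadj u hu)), hxv, hxN u hu]; ring
    calc (d+1)^2 = T u v := h1.symm
    _ ≤ ∑ w, T u w := Finset.single_le_sum (fun w _ => hTnn u w) (Finset.mem_univ v)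
  have hsplit : f v + ∑ u ∈ N, f u ≤ ∑ u, f u := by
    have h1 : ∑ u ∈ insert v N, f u ≤ ∑ u, f u :=
      Finset.sum_le_sum_of_subset_of_nonneg (Finset.subset_univ _) (fun u _ _ => hfnn u)
    rwa [Finset.sum_insert hv] at h1
  have hNsum : d * (d+1)^2 ≤ ∑ u ∈ N, f u := by
    calc d * (d+1)^2 = ∑ _u ∈ N, (d+1)^2 := by
          rw [Finset.sum_const, nsmul_eq_mul, hdd]
    _ ≤ ∑ u ∈ N, f u := Finset.sum_le_sum hfN
  have htot : 2 * (d * (d+1)^2) ≤ ∑ u, f u := by linarith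
  have heq : ∑ u, f u = ∑ u, ∑ w, (if P u w then (x u - x w)^2 else 0) := rfl
  linarith [heq ▸ htot]

end StarVec

set_option maxHeartbeats 1000000 in
theorem dls_lower_maxDegree_indepNum (n : ℕ) (G : SimpleGraph (Fin n))
    [DecidableRel G.Adj] (hG : G.Connected) (hd : G.diam = 2)
    (μ : Fin n → ℝ) (hμ : IsDLSpec G μ) (hmono : Antitone μ) :
    (G.maxDegree : ℝ) + (indepNum G : ℝ) + 1 - n ≤ μ ⟨0, by have h0 : 0 < n := Fin.pos_iff_nonempty.mpr hG.nonempty; omega⟩ - μ ⟨n - 2, by have h0 : 0 < n := Fin.pos_iff_nonempty.mpr hG.nonempty; omega⟩ := by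
  classical
  have h0 : 0 < n := Fin.pos_iff_nonempty.mpr hG.nonempty
  haveI : Nonempty (Fin n) := ⟨⟨0, h0⟩⟩
  set M := distLap G with hM
  have hA : M.IsHermitian := distLap_isHermitian G
  have hch : M.charpoly = ∏ i, (X - C (hA.eigenvalues i)) := charpoly_eq_prod_eigen hA
  have hms : Multiset.map μ Finset.univ.val = Multiset.map hA.eigenvalues Finset.univ.val :=
    eigen_multiset_eq hA μ hμ hch
  set lam := hA.eigenvalues with hlam
  set i0 : Fin n := ⟨0, by omega⟩ with hi0
  set i1 : Fin n := ⟨n - 2, by omega⟩ with hi1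
  have hex : ∀ i, ∃ j, lam i = μ j := by
    intro i
    have h1 : lam i ∈ Multiset.map lam Finset.univ.val :=
      Multiset.mem_map.mpr ⟨i, by simp, rfl⟩
    rw [← hms] at h1
    obtain ⟨j, _, hj⟩ := Multiset.mem_map.mp h1
    exact ⟨j, hj.symm⟩
  have hmax : ∀ i, lam i ≤ μ i0 := by
    intro i
    obtain ⟨j, hj⟩ := hex i
    rw [hj]
    exact hmono (show i0 ≤ j by simp [hi0, Fin.le_def])
  -- pair at distance two
  obtain ⟨a, b, hab⟩ := SimpleGraph.exists_dist_eq_diam (G := G)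
  rw [hd] at hab
  have hne_ab : a ≠ b := by
    intro h; subst h; rw [SimpleGraph.dist_self] at hab; omega
  have hnadj : ¬ G.Adj a b := by
    intro h
    have := SimpleGraph.dist_eq_one_iff_adj.mpr h
    omega
  -- independence number
  have hSbdd : BddAbove {k | ∃ s : Finset (Fin n),
      (∀ u ∈ s, ∀ v ∈ s, ¬ G.Adj u v) ∧ s.card = k} := by
    refine ⟨n, fun k hk => ?_⟩
    obtain ⟨s, _, hc⟩ := hk
    rw [← hc]
    calc s.card ≤ (Finset.univ : Finset (Fin n)).card := Finset.card_le_card (Finset.subset_univ s)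
    _ = n := by simp
  have hSne : ({k | ∃ s : Finset (Fin n),
      (∀ u ∈ s, ∀ v ∈ s, ¬ G.Adj u v) ∧ s.card = k} : Set ℕ).Nonempty :=
    ⟨0, ∅, by simp⟩
  have hmem : indepNum G ∈ {k | ∃ s : Finset (Fin n),
      (∀ u ∈ s, ∀ v ∈ s, ¬ G.Adj u v) ∧ s.card = k} := Nat.sSup_mem hSne hSbdd
  obtain ⟨s, hs_ind, hs_card⟩ := hmem
  have hα2 : 2 ≤ indepNum G := by
    apply le_csSup hSbdd
    refine ⟨{a, b}, ?_, ?_⟩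
    · intro u hu v hv hadj
      rcases Finset.mem_insert.mp hu with rfl | hu'
      · rcases Finset.mem_insert.mp hv with rfl | hv'
        · exact G.irrefl hadj
        · rw [Finset.mem_singleton.mp hv'] at hadj; exact hnadj hadj
      · rw [Finset.mem_singleton.mp hu'] at hadj
        rcases Finset.mem_insert.mp hv with rfl | hv'
        · exact hnadj hadj.symm
        · rw [Finset.mem_singleton.mp hv'] at hadj; exact G.irrefl hadj
    · rw [Finset.card_insert_of_notMem (by simp [hne_ab]), Finset.card_singleton]
  have hs_ne : s.Nonempty := Finset.card_pos.mp (by omega)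
  obtain ⟨v₁, hv₁⟩ := hs_ne
  -- max degree facts
  obtain ⟨p, hp⟩ := hG.exists_walk_length_eq_dist a b
  rw [hab] at hp
  have hΔ1 : 1 ≤ G.maxDegree := by
    cases p with
    | nil => simp at hp
    | cons hadj q =>
      calc 1 ≤ G.degree a := (SimpleGraph.degree_pos_iff_exists_adj G a).mpr ⟨_, hadj⟩
      _ ≤ G.maxDegree := G.degree_le_maxDegree a
  obtain ⟨v₀, hv₀⟩ := G.exists_maximal_degree_vertex
  have hΔn : G.maxDegree < n := by
    rw [hv₀]
    simpa using G.degree_lt_card_verts v₀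
  -- test vector x at max degree vertex
  set N₀ := G.neighborFinset v₀ with hN₀
  have hv₀N : v₀ ∉ N₀ := by simp [hN₀]
  have hcardN₀ : N₀.card = G.maxDegree := by
    rw [hN₀, G.card_neighborFinset_eq_degree, ← hv₀]
  set x := starVec v₀ N₀ with hxdef
  have hxsum : ∑ u, x u = 0 := starVec_sum hv₀N
  have hxdot : x ⬝ᵥ x = (N₀.card : ℝ)^2 + N₀.card := starVec_dot hv₀N
  have hxq := starVec_qbound G.Adj (fun a b h => h.symm) v₀ N₀ hv₀N
    (fun u hu => (SimpleGraph.mem_neighborFinset G v₀ u).mp hu)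
  -- test vector y at independent set vertex
  set N₁ := s.erase v₁ with hN₁
  have hv₁N : v₁ ∉ N₁ := Finset.notMem_erase _ _
  have hcardN₁ : N₁.card = indepNum G - 1 := by
    rw [hN₁, Finset.card_erase_of_mem hv₁, hs_card]
  letI instP : DecidableRel (fun u w : Fin n => u ≠ w ∧ ¬ G.Adj u w) :=
    fun u w => inferInstanceAs (Decidable (u ≠ w ∧ ¬ G.Adj u w))
  have hPsym : ∀ a b : Fin n, (a ≠ b ∧ ¬ G.Adj a b) → (b ≠ a ∧ ¬ G.Adj b a) :=
    fun a b h => ⟨h.1.symm, fun hadj => h.2 hadj.symm⟩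
  have hyq := starVec_qbound (fun u w : Fin n => u ≠ w ∧ ¬ G.Adj u w) hPsym v₁ N₁ hv₁N
    (fun u hu => ⟨(Finset.ne_of_mem_erase hu).symm, hs_ind v₁ hv₁ u (Finset.mem_of_mem_erase hu)⟩)
  set y := starVec v₁ N₁ with hydef
  have hysum : ∑ u, y u = 0 := starVec_sum hv₁N
  have hydot : y ⬝ᵥ y = (N₁.card : ℝ)^2 + N₁.card := starVec_dot hv₁N
  -- numeric abbreviations
  set Δr : ℝ := (G.maxDegree : ℝ) with hΔr
  set αr : ℝ := (indepNum G : ℝ) with hαr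
  have hΔr1 : 1 ≤ Δr := by rw [hΔr]; exact_mod_cast hΔ1
  have hΔrn : Δr + 1 ≤ n := by rw [hΔr]; exact_mod_cast hΔn
  have hαr2 : 2 ≤ αr := by rw [hαr]; exact_mod_cast hα2
  have hN₀r : (N₀.card : ℝ) = Δr := by rw [hcardN₀, hΔr]
  have hN₁r : (N₁.card : ℝ) = αr - 1 := by
    rw [hcardN₁, hαr]
    have : 1 ≤ indepNum G := by omega
    push_cast [Nat.cast_sub this]
    ring
  -- first main bound : μ i0 ≥ n + α
  have hμ0 : (n : ℝ) + αr ≤ μ i0 := by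
    have hkey := key_identity G hG hd y
    have hq := q_split G y
    have hup := rayleigh_upper hA (μ i0) hmax y
    rw [hN₁r] at hyq hydot
    rw [hysum] at hkey hq
    have hYpos : 0 < y ⬝ᵥ y := by rw [hydot]; nlinarith
    by_contra hcon
    push_neg at hcon
    nlinarith [hkey, hq, hup, hyq, hydot, hYpos, hαr2]
  rcases le_or_gt (μ i1) 0 with hneg | hpos
  · -- degenerate case
    show _ ≤ μ i0 - μ i1
    linarith [hμ0, hΔrn, hneg]
  · -- main case: μ i1 ≤ 2n - (Δ + 1)
    have hcnt : (Finset.univ.filter (fun i => lam i < μ i1)).card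
        = (Finset.univ.filter (fun j => μ j < μ i1)).card := by
      have h1 := congrArg (Multiset.countP (fun a => a < μ i1)) hms
      rw [Multiset.countP_map, Multiset.countP_map] at h1
      exact (h1.symm : _)
    have hfμ : (Finset.univ.filter (fun j => μ j < μ i1)).card ≤ 1 := by
      have hsub : Finset.univ.filter (fun j => μ j < μ i1)
          ⊆ {(⟨n-1, by omega⟩ : Fin n)} := by
        intro j hj
        simp only [Finset.mem_filter] at hj
        simp only [Finset.mem_singleton]
        by_contra hne
        have hle : j ≤ i1 := by
          have h1 : j.val < n := j.isLt
          have h2 : j.val ≠ n - 1 := fun h => hne (Fin.ext h)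
          simp only [hi1, Fin.le_def]
          omega
        exact absurd (hmono hle) (not_le.mpr hj.2)
      calc (Finset.univ.filter (fun j => μ j < μ i1)).card
          ≤ ({(⟨n-1, by omega⟩ : Fin n)} : Finset (Fin n)).card := Finset.card_le_card hsub
      _ = 1 := Finset.card_singleton _
    have hflam : (Finset.univ.filter (fun i => lam i < μ i1)).card ≤ 1 := by
      rw [hcnt]; exact hfμ
    obtain ⟨i₀, hi₀sub⟩ := Finset.card_le_one_iff_subset_singleton.mp hflam
    have hlow : ∀ i, i ≠ i₀ → μ i1 ≤ lam i := by
      intro i hi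
      by_contra hcon
      push_neg at hcon
      have : i ∈ Finset.univ.filter (fun i => lam i < μ i1) := by
        simp [hcon]
      have := hi₀sub this
      rw [Finset.mem_singleton] at this
      exact hi this
    have hlo := rayleigh_lower_perp hA (μ i1) hpos h0 i₀ hlow (distLap_mulVec_one G) x hxsum
    have hkeyx := key_identity G hG hd x
    rw [hN₀r] at hxq hxdot
    have hXpos : 0 < x ⬝ᵥ x := by rw [hxdot]; nlinarith
    have hub : x ⬝ᵥ (M *ᵥ x) ≤ (2*(n:ℝ) - (Δr+1)) * (x ⬝ᵥ x) := by
      rw [hkeyx, hxsum, hxdot]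
      nlinarith [hxq]
    have hbound : μ i1 ≤ 2*(n:ℝ) - (Δr + 1) := by
      by_contra hcon
      push_neg at hcon
      nlinarith [hlo, hub, hXpos]
    show _ ≤ μ i0 - μ i1
    linarith [hμ0, hbound]
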